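/- arXiv:1303.3314 — 5 statements merged into one kernel-verified Lean document; each statement's English description precedes it below -/
import Mathlib

section
/- Let φ ∈ L^∞(𝕋) be real-valued and suppose g ∈ H² is outer and there exists c ∈ ℂ such that φ·|g|² = c·e₁ + conj(c)·e₋₁ almost everywhere on 𝕋. Let ĝ(0) = ⟨g, e₀⟩ and ĝ(1) = ⟨g, e₁⟩, and let V be the subspace of span{e₀, e₁} consisting of all vectors orthogonal to ĝ(0)·e₀ + ĝ(1)·e₁. Then g ∈ H²_V and T_φ^V g = 0. -/
noncomputable section

open MeasureTheory Complex
open scoped ComplexConjugate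

namespace NeilToeplitz

instance fact_two_pi_pos : Fact (0 < 2 * Real.pi) := ⟨by positivity⟩

/-- The circle group `ℝ / 2πℤ`. -/
abbrev 𝕋 : Type := AddCircle (2 * Real.pi)

/-- Normalized arclength (Haar probability) measure on the circle. -/
abbrev μ : Measure 𝕋 := AddCircle.haarAddCircle

/-- The Lebesgue space `L²(𝕋)`. -/
abbrev L2 : Type := Lp ℂ 2 μ

/-- The exponential `e_n(e^{it}) = e^{int}` as an element of `L²(𝕋)`. -/
def e (n : ℤ) : L2 := fourierLp 2 n

/-- The Hardy space `H²`, the closed linear span of `{e_n : n ≥ 0}` in `L²(𝕋)`. -/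
def H2 : Submodule ℂ L2 :=
  (Submodule.span ℂ (Set.range fun n : ℕ => e (n : ℤ))).topologicalClosure

/-- The space `H²_V = H² ∩ V^⊥`. -/
def H2V (V : Submodule ℂ L2) : Submodule ℂ L2 := H2 ⊓ Vᗮ

lemma isClosed_H2V (V : Submodule ℂ L2) : IsClosed ((H2V V : Set L2)) := by
  have h1 : IsClosed ((H2 : Set L2)) := Submodule.isClosed_topologicalClosure _
  have h2 : IsClosed ((Vᗮ : Set L2)) := Submodule.isClosed_orthogonal V
  simpa [H2V] using h1.inter h2

instance (V : Submodule ℂ L2) : CompleteSpace (H2V V) :=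
  (isClosed_H2V V).completeSpace_coe

/-- A bounded (a.e.) measurable function times an `L²` function is in `L²`. -/
lemma memLp_bdd_mul {φ : 𝕋 → ℂ} (hφ : AEStronglyMeasurable φ μ) (C : ℝ)
    (hC : ∀ᵐ x ∂μ, ‖φ x‖ ≤ C) (g : L2) :
    MemLp (fun x => φ x * g x) 2 μ := by
  refine MemLp.of_le_mul (c := C) (Lp.memLp g) (hφ.mul (Lp.aestronglyMeasurable g)) ?_
  filter_upwards [hC] with x hx
  rw [norm_mul]
  exact mul_le_mul_of_nonneg_right hx (norm_nonneg _)

/-- Multiplication of `g ∈ L²` by a real-valued bounded measurable symbol `φ`. -/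
def phiMul (φ : 𝕋 → ℝ) (hφ : Measurable φ) {C : ℝ} (hC : ∀ x, |φ x| ≤ C) (g : L2) : L2 :=
  (memLp_bdd_mul ((Complex.measurable_ofReal.comp hφ).aestronglyMeasurable) C
    (Filter.Eventually.of_forall fun x => by simpa using hC x) g).toLp _

/-- The Toeplitz operator `T_φ^V : H²_V → H²_V`, `g ↦ P_V (φ · g)`. -/
def toeplitz (φ : 𝕋 → ℝ) (hφ : Measurable φ) {C : ℝ} (hC : ∀ x, |φ x| ≤ C)
    (V : Submodule ℂ L2) (g : H2V V) : H2V V :=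
  (H2V V).orthogonalProjectionOnto (phiMul φ hφ hC (g : L2))

/-- Multiplication of `g ∈ L²` by the exponential `e_n`. -/
def mulFourier (n : ℤ) (g : L2) : L2 :=
  (memLp_bdd_mul (map_continuous (fourier n)).aestronglyMeasurable 1
    (Filter.Eventually.of_forall fun x => le_of_eq (Circle.norm_coe _)) g).toLp _

/-- `g` is outer: the analytic-polynomial multiples of `g` are dense in `H²`. -/
def Outer (g : L2) : Prop :=
  (Submodule.span ℂ (Set.range fun n : ℕ => mulFourier (n : ℤ) g)).topologicalClosure = H2

/-- `lam` is an eigenvalue of `φ` relative to the Neil algebra. -/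
def IsEigenvalueRelNeil (φ : 𝕋 → ℝ) (hφ : Measurable φ) {C : ℝ} (hC : ∀ x, |φ x| ≤ C)
    (lam : ℝ) : Prop :=
  ∃ V : Submodule ℂ L2, V ≤ Submodule.span ℂ {e 0, e 1} ∧
    ∃ g : H2V V, g ≠ 0 ∧ toeplitz φ hφ hC V g = (lam : ℂ) • g

end NeilToeplitz

namespace NeilToeplitz

lemma coeFn_e (n : ℤ) : ⇑(e n) =ᵐ[μ] fourier n := coeFn_fourierLp 2 n

lemma inner_e_e (m n : ℤ) : (inner ℂ (e m) (e n) : ℂ) = if m = n then 1 else 0 := by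
  have h := fourierBasis (T := 2 * Real.pi) |>.orthonormal
  have := orthonormal_iff_ite.mp h m n
  simp only [e]; rw [← coe_fourierBasis]; exact this

lemma inner_eq_integral (f g : L2) :
    (inner ℂ f g : ℂ) = ∫ x, conj (f x) * g x ∂μ := by
  rw [MeasureTheory.L2.inner_def]
  simp [RCLike.inner_apply, mul_comm]

lemma coeFn_mulFourier (n : ℤ) (g : L2) :
    ⇑(mulFourier n g) =ᵐ[μ] fun x => fourier n x * g x := by
  exact MemLp.coeFn_toLp _

lemma coeFn_phiMul (φ : 𝕋 → ℝ) (hφ : Measurable φ) {C : ℝ} (hC : ∀ x, |φ x| ≤ C) (g : L2) :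
    ⇑(phiMul φ hφ hC g) =ᵐ[μ] fun x => (φ x : ℂ) * g x := by
  exact MemLp.coeFn_toLp _

lemma integral_fourier' (n : ℤ) : ∫ x, fourier n x ∂μ = if (0:ℤ) = n then 1 else 0 := by
  have h := inner_e_e 0 n
  rw [inner_eq_integral] at h
  rw [← h]
  refine integral_congr_ae ?_
  filter_upwards [coeFn_e 0, coeFn_e n] with x h0 hn
  rw [h0, hn]
  simp

end NeilToeplitz

namespace NeilToeplitz

lemma integrable_smul_fourier (a : ℂ) (n : ℤ) :
    Integrable (fun x : 𝕋 => a * fourier n x) μ :=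
  (((fourier n).continuous).const_smul a).integrable_of_hasCompactSupport
    (HasCompactSupport.of_compactSpace _)

lemma inner_e_mulFourier (m n : ℤ) (g : L2) :
    (inner ℂ (e m) (mulFourier n g) : ℂ) = inner ℂ (e (m - n)) g := by
  rw [inner_eq_integral, inner_eq_integral]
  refine integral_congr_ae ?_
  filter_upwards [coeFn_e m, coeFn_e (m - n), coeFn_mulFourier n g] with x h1 h2 h3
  rw [h1, h3, h2, show fourier (m - n) x = fourier m x * conj (fourier n x) by
    rw [sub_eq_add_neg, fourier_add, fourier_neg], map_mul, Complex.conj_conj]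
  ring

lemma H2_le_ker (Φ : L2 →L[ℂ] ℂ) (h : ∀ n : ℕ, Φ (e n) = 0) :
    H2 ≤ LinearMap.ker (Φ : L2 →ₗ[ℂ] ℂ) := by
  refine Submodule.topologicalClosure_minimal _ ?_ ?_
  · rw [Submodule.span_le]
    rintro _ ⟨n, rfl⟩
    exact h n
  · exact ContinuousLinearMap.isClosed_ker Φ

lemma outer_le_ker {g : L2} (hout : Outer g) (Φ : L2 →L[ℂ] ℂ)
    (h : ∀ n : ℕ, Φ (mulFourier (n : ℤ) g) = 0) :
    H2 ≤ LinearMap.ker (Φ : L2 →ₗ[ℂ] ℂ) := by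
  rw [← hout]
  refine Submodule.topologicalClosure_minimal _ ?_ (ContinuousLinearMap.isClosed_ker Φ)
  rw [Submodule.span_le]
  rintro _ ⟨n, rfl⟩
  exact h n

lemma inner_e_H2 {g : L2} (hg : g ∈ H2) {m : ℤ} (hm : m < 0) : (inner ℂ (e m) g : ℂ) = 0 := by
  have key : H2 ≤ LinearMap.ker (innerSL ℂ (e m) : L2 →ₗ[ℂ] ℂ) := by
    refine H2_le_ker _ fun n => ?_
    have : (inner ℂ (e m) (e (n : ℤ)) : ℂ) = 0 := by
      rw [inner_e_e, if_neg]
      omega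
    simpa using this
  simpa using key hg

lemma e_mem_H2 (n : ℕ) : e (n : ℤ) ∈ H2 :=
  Submodule.le_topologicalClosure _ (Submodule.subset_span ⟨n, rfl⟩)

lemma inner_e0_ne_zero {g : L2} (hgH2 : g ∈ H2) (hout : Outer g) :
    (inner ℂ (e 0) g : ℂ) ≠ 0 := by
  intro h0
  have key : H2 ≤ LinearMap.ker (innerSL ℂ (e 0) : L2 →ₗ[ℂ] ℂ) := by
    refine outer_le_ker hout _ fun n => ?_
    have : (inner ℂ (e 0) (mulFourier (n : ℤ) g) : ℂ) = 0 := by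
      rw [inner_e_mulFourier]
      rcases Nat.eq_zero_or_pos n with h | h
      · subst h; simpa using h0
      · exact inner_e_H2 hgH2 (by omega)
    simpa using this
  have := key (e_mem_H2 0)
  simp only [LinearMap.mem_ker, ContinuousLinearMap.coe_coe, innerSL_apply_apply] at this
  rw [inner_e_e] at this
  simp at this

end NeilToeplitz

namespace NeilToeplitz

lemma inner_phiMul_mulFourier (φ : 𝕋 → ℝ) (hφ : Measurable φ) {C : ℝ} (hC : ∀ x, |φ x| ≤ C)
    (g : L2) (c : ℂ)
    (heq : ∀ᵐ x ∂μ, (φ x : ℂ) * (‖(g : 𝕋 → ℂ) x‖ : ℂ) ^ 2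
      = c * fourier 1 x + conj c * fourier (-1) x) (n : ℕ) :
    (inner ℂ (phiMul φ hφ hC g) (mulFourier (n : ℤ) g) : ℂ)
      = conj c * (if (n : ℤ) = 1 then 1 else 0) := by
  rw [inner_eq_integral]
  have hae : (fun x => conj ((phiMul φ hφ hC g) x) * (mulFourier (n : ℤ) g) x)
      =ᵐ[μ] fun x => c * fourier ((n : ℤ) + 1) x + conj c * fourier ((n : ℤ) - 1) x := by
    filter_upwards [coeFn_phiMul φ hφ hC g, coeFn_mulFourier (n : ℤ) g, heq] with x h1 h2 h3
    rw [h1, h2]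
    have hg2 : conj (g x) * g x = ((‖(g : 𝕋 → ℂ) x‖ : ℝ) : ℂ) ^ 2 := by
      rw [RCLike.conj_mul]; norm_cast
    calc conj ((φ x : ℂ) * g x) * (fourier (n : ℤ) x * g x)
        = fourier (n : ℤ) x * ((φ x : ℂ) * (conj (g x) * g x)) := by
          rw [map_mul, Complex.conj_ofReal]; ring
      _ = fourier (n : ℤ) x * (c * fourier 1 x + conj c * fourier (-1) x) := by
          rw [hg2, h3]
      _ = c * fourier ((n : ℤ) + 1) x + conj c * fourier ((n : ℤ) - 1) x := by
          rw [fourier_add, show (n : ℤ) - 1 = (n : ℤ) + (-1) by ring, fourier_add]; ring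
  rw [integral_congr_ae hae,
    integral_add (integrable_smul_fourier _ _) (integrable_smul_fourier _ _),
    integral_const_mul, integral_const_mul, integral_fourier', integral_fourier']
  have h1 : ¬ ((0 : ℤ) = (n : ℤ) + 1) := by omega
  have h2 : ((0 : ℤ) = (n : ℤ) - 1) ↔ ((n : ℤ) = 1) := by omega
  rw [if_neg h1]
  by_cases hn : (n : ℤ) = 1
  · rw [if_pos (h2.mpr hn), if_pos hn]; ring
  · rw [if_neg (fun h => hn (h2.mp h)), if_neg hn]; ring

end NeilToeplitz

namespace NeilToeplitz

/-- if `g ∈ H²` is outer and `φ·|g|² = c·e₁ + conj(c)·e₋₁` a.e., then with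
`V ⊆ span{e₀,e₁}` the subspace of vectors orthogonal to `ĝ(0)·e₀ + ĝ(1)·e₁`, one has
`g ∈ H²_V` and `T_φ^V g = 0`. -/
theorem toeplitz_kernel_of_outer (φ : 𝕋 → ℝ) (hφ : Measurable φ) {C : ℝ} (hC : ∀ x, |φ x| ≤ C)
    (g : L2) (hgH2 : g ∈ H2) (hout : Outer g) (c : ℂ)
    (heq : ∀ᵐ x ∂μ, (φ x : ℂ) * (‖(g : 𝕋 → ℂ) x‖ : ℂ) ^ 2
      = c * fourier 1 x + conj c * fourier (-1) x)
    (V : Submodule ℂ L2)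
    (hVdef : V = Submodule.span ℂ {e 0, e 1} ⊓
      (Submodule.span ℂ {(inner ℂ (e 0) g : ℂ) • e 0 + (inner ℂ (e 1) g : ℂ) • e 1})ᗮ) :
    ∃ hgV : g ∈ H2V V, toeplitz φ hφ hC V ⟨g, hgV⟩ = 0 := by
  set g0 : ℂ := inner ℂ (e 0) g with hg0def
  set g1 : ℂ := inner ℂ (e 1) g with hg1def
  have hg0 : g0 ≠ 0 := inner_e0_ne_zero hgH2 hout
  set Φ : L2 →L[ℂ] ℂ :=
    (g0 ^ 2) • innerSL ℂ (phiMul φ hφ hC g) - (conj c * g0) • innerSL ℂ (e 1)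
      + (conj c * g1) • innerSL ℂ (e 0) with hΦ
  -- key identity on H²
  have hker : H2 ≤ LinearMap.ker (Φ : L2 →ₗ[ℂ] ℂ) := by
    refine outer_le_ker hout _ fun n => ?_
    have h0 : (inner ℂ (e 0) (mulFourier (n : ℤ) g) : ℂ)
        = if (n : ℤ) = 0 then g0 else 0 := by
      rw [inner_e_mulFourier]
      by_cases h : (n : ℤ) = 0
      · rw [if_pos h, h]; rfl
      · rw [if_neg h]; exact inner_e_H2 hgH2 (by omega)
    have h1 : (inner ℂ (e 1) (mulFourier (n : ℤ) g) : ℂ)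
        = if (n : ℤ) = 0 then g1 else if (n : ℤ) = 1 then g0 else 0 := by
      rw [inner_e_mulFourier]
      by_cases h : (n : ℤ) = 0
      · rw [if_pos h, h]; rfl
      · rw [if_neg h]
        by_cases h' : (n : ℤ) = 1
        · rw [if_pos h', h']; rfl
        · rw [if_neg h']; exact inner_e_H2 hgH2 (by omega)
    have hphi := inner_phiMul_mulFourier φ hφ hC g c heq n
    simp only [LinearMap.mem_ker, hΦ, ContinuousLinearMap.coe_coe,
      ContinuousLinearMap.add_apply, ContinuousLinearMap.sub_apply,
      ContinuousLinearMap.smul_apply, innerSL_apply_apply, smul_eq_mul]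
    rw [hphi, h0, h1]
    by_cases h : (n : ℤ) = 0
    · simp only [if_pos h, if_neg (show ¬ ((n : ℤ) = 1) by omega)]; ring
    · by_cases h' : (n : ℤ) = 1
      · simp only [if_pos h', if_neg h]; ring
      · simp only [if_neg h, if_neg h']; ring
  -- g ⊥ V
  have hgVperp : g ∈ Vᗮ := by
    rw [Submodule.mem_orthogonal, hVdef]
    rintro v ⟨hv1, hv2⟩
    obtain ⟨a, b, rfl⟩ := Submodule.mem_span_pair.mp hv1
    have hw : (inner ℂ (g0 • e 0 + g1 • e 1) (a • e 0 + b • e 1) : ℂ) = 0 :=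
      Submodule.mem_orthogonal_singleton_iff_inner_right.mp hv2
    have hw' : conj g0 * a + conj g1 * b = 0 := by
      rw [inner_add_left, inner_add_right, inner_add_right] at hw
      simp only [inner_smul_left, inner_smul_right, inner_e_e] at hw
      norm_num at hw
      linear_combination hw
    rw [inner_add_left]
    simp only [inner_smul_left]
    rw [← hg0def, ← hg1def]
    have := congrArg conj hw'
    simp only [map_add, map_mul, map_zero, Complex.conj_conj] at this
    linear_combination this
  refine ⟨⟨hgH2, hgVperp⟩, ?_⟩
  -- φ·g ⊥ H²_V
  have hperp : phiMul φ hφ hC g ∈ (H2V V)ᗮ := by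
    rw [Submodule.mem_orthogonal]
    rintro h ⟨hhH2, hhV⟩
    have hΦh : Φ h = 0 := hker hhH2
    simp only [hΦ, ContinuousLinearMap.add_apply, ContinuousLinearMap.sub_apply,
      ContinuousLinearMap.smul_apply, innerSL_apply_apply, smul_eq_mul] at hΦh
    have hv0 : (conj g1) • e 0 - (conj g0) • e 1 ∈ V := by
      rw [hVdef]
      refine Submodule.mem_inf.mpr ⟨?_, ?_⟩
      · rw [sub_eq_add_neg, ← neg_smul]
        exact Submodule.mem_span_pair.mpr ⟨conj g1, -(conj g0), rfl⟩
      · refine Submodule.mem_orthogonal_singleton_iff_inner_right.mpr ?_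
        rw [inner_sub_right, inner_add_left, inner_add_left]
        simp only [inner_smul_left, inner_smul_right, inner_e_e]
        norm_num
        ring
    have h0 : (inner ℂ ((conj g1) • e 0 - (conj g0) • e 1) h : ℂ) = 0 :=
      (Submodule.mem_orthogonal V h).mp hhV _ hv0
    rw [inner_sub_left] at h0
    simp only [inner_smul_left, Complex.conj_conj] at h0
    -- h0 : g1 * ⟪e0,h⟫ - g0 * ⟪e1,h⟫ = 0
    have hA : (inner ℂ (phiMul φ hφ hC g) h : ℂ) = 0 := by
      have hg02 : (g0 : ℂ) ^ 2 ≠ 0 := pow_ne_zero _ hg0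
      have : g0 ^ 2 * (inner ℂ (phiMul φ hφ hC g) h : ℂ)
          = conj c * g0 * (inner ℂ (e 1) h : ℂ) - conj c * g1 * (inner ℂ (e 0) h : ℂ) := by
        linear_combination hΦh
      have hz : g0 ^ 2 * (inner ℂ (phiMul φ hφ hC g) h : ℂ) = 0 := by
        rw [this]; linear_combination (- conj c) * h0
      exact (mul_eq_zero.mp hz).resolve_left hg02
    rw [← inner_conj_symm, hA, map_zero]
  rw [toeplitz]
  exact Submodule.orthogonalProjectionOnto_apply_of_mem_orthogonal hperp

end NeilToeplitz
end
end

section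
/- Let V be a linear subspace of span{e₀, e₁} and let M and N be nonzero closed subspaces of H²_V, each invariant under multiplication by every analytic polynomial p whose coefficient of e₁ is zero (i.e. invariant for the representation of the Neil algebra on H²_V). Then M and N are not orthogonal. In other words, the representation π_V of the Neil algebra on H²_V has rank one: there is no nontrivial pair of mutually orthogonal invariant subspaces. -/
noncomputable section

open MeasureTheory Complex
open scoped ComplexConjugate

namespace NeilToeplitz

open scoped NNReal ENNReal

lemma zz_ofReal_eq_ofReal_neg {a : ℝ} (h : ENNReal.ofReal a = ENNReal.ofReal (-a)) : a = 0 := by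
  rcases lt_trichotomy a 0 with h0 | h0 | h0
  · have h1 : ENNReal.ofReal a = 0 := ENNReal.ofReal_eq_zero.mpr h0.le
    have h2 : ENNReal.ofReal (-a) ≠ 0 := by
      simp only [ne_eq, ENNReal.ofReal_eq_zero, not_le]; linarith
    rw [h1] at h; exact absurd h.symm h2
  · exact h0
  · have h1 : ENNReal.ofReal (-a) = 0 := ENNReal.ofReal_eq_zero.mpr (by linarith)
    have h2 : ENNReal.ofReal a ≠ 0 := by
      simp only [ne_eq, ENNReal.ofReal_eq_zero, not_le]; linarith
    exact absurd (h.trans h1) h2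

/-- A real integrable function on the circle whose integrals against all continuous functions
vanish is a.e. zero. -/
lemma zz_real_ae_zero {r : 𝕋 → ℝ} (hr : Integrable r μ)
    (h : ∀ φ : C(𝕋, ℝ), ∫ x, φ x * r x ∂μ = 0) : r =ᵐ[μ] 0 := by
  have hmeas : AEMeasurable r μ := hr.aemeasurable
  set F : 𝕋 → ℝ≥0∞ := fun x => ENNReal.ofReal (r x) with hF
  set G : 𝕋 → ℝ≥0∞ := fun x => ENNReal.ofReal (-(r x)) with hG
  have hFm : AEMeasurable F μ := hmeas.ennreal_ofReal
  have hGm : AEMeasurable G μ := hmeas.neg.ennreal_ofReal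
  have hFfin : ∫⁻ x, F x ∂μ ≠ ∞ := by
    refine ne_of_lt (lt_of_le_of_lt (lintegral_mono fun x => ?_) hr.hasFiniteIntegral)
    exact Real.ofReal_le_enorm (r x)
  have hGfin : ∫⁻ x, G x ∂μ ≠ ∞ := by
    refine ne_of_lt (lt_of_le_of_lt (lintegral_mono fun x => ?_) hr.neg.hasFiniteIntegral)
    exact Real.ofReal_le_enorm (-(r x))
  have key : μ.withDensity F = μ.withDensity G := by
    have : IsFiniteMeasure (μ.withDensity F) := isFiniteMeasure_withDensity hFfin
    refine ext_of_forall_lintegral_eq_of_IsFiniteMeasure fun f => ?_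
    have hfc : AEMeasurable (fun x => (f x : ℝ≥0∞)) μ :=
      f.continuous.measurable.coe_nnreal_ennreal.aemeasurable
    rw [lintegral_withDensity_eq_lintegral_mul₀ hFm hfc,
      lintegral_withDensity_eq_lintegral_mul₀ hGm hfc]
    obtain ⟨x0, -, hC⟩ := isCompact_univ.exists_isMaxOn (Set.univ_nonempty)
      (f.continuous.continuousOn (s := Set.univ))
    set C : ℝ≥0 := f x0 with hCdef
    have hC' : ∀ x, f x ≤ C := fun x => hC (Set.mem_univ x)
    have hφ : ∫ x, (f x : ℝ) * r x ∂μ = 0 :=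
      h ⟨fun x => (f x : ℝ), NNReal.continuous_coe.comp f.continuous⟩
    have hint : Integrable (fun x => (f x : ℝ) * r x) μ := by
      refine hr.bdd_mul ((NNReal.continuous_coe.comp f.continuous).aestronglyMeasurable)
        (c := C) (Filter.Eventually.of_forall fun x => ?_)
      simpa [Real.norm_eq_abs, _root_.abs_of_nonneg (f x).2] using NNReal.coe_le_coe.mpr (hC' x)
    have heq := integral_eq_lintegral_pos_part_sub_lintegral_neg_part hint
    rw [hφ] at heq
    have hpos : (fun x => ENNReal.ofReal ((f x : ℝ) * r x)) = (F * fun x => (f x : ℝ≥0∞)) := by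
      funext x
      rw [Pi.mul_apply, ENNReal.ofReal_mul (NNReal.coe_nonneg (f x)), ENNReal.ofReal_coe_nnreal,
        mul_comm]
    have hneg : (fun x => ENNReal.ofReal (-((f x : ℝ) * r x))) = (G * fun x => (f x : ℝ≥0∞)) := by
      funext x
      rw [Pi.mul_apply, ← mul_neg, ENNReal.ofReal_mul (NNReal.coe_nonneg (f x)),
        ENNReal.ofReal_coe_nnreal, mul_comm]
    rw [hpos, hneg] at heq
    have hbdd : ∀ (H : 𝕋 → ℝ≥0∞), AEMeasurable H μ → (∫⁻ x, H x ∂μ ≠ ∞) →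
        ∫⁻ x, (H * fun x => (f x : ℝ≥0∞)) x ∂μ ≠ ∞ := by
      intro H hHm hHfin
      have : ∀ x, (H * fun x => (f x : ℝ≥0∞)) x ≤ H x * (C : ℝ≥0∞) := by
        intro x
        exact mul_le_mul_right (ENNReal.coe_le_coe.mpr (hC' x)) _
      refine ne_of_lt (lt_of_le_of_lt (lintegral_mono this) ?_)
      rw [lintegral_mul_const'' _ hHm]
      exact ENNReal.mul_lt_top hHfin.lt_top ENNReal.coe_lt_top
    have hA := hbdd F hFm hFfin
    have hB := hbdd G hGm hGfin
    have : (∫⁻ x, (F * fun x => (f x : ℝ≥0∞)) x ∂μ).toReal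
        = (∫⁻ x, (G * fun x => (f x : ℝ≥0∞)) x ∂μ).toReal := by linarith
    exact (ENNReal.toReal_eq_toReal_iff' hA hB).mp this
  have := (withDensity_eq_iff hFm hGm hFfin).mp key
  filter_upwards [this] with x hx
  exact zz_ofReal_eq_ofReal_neg hx

lemma zz_integrable_cmul {w : 𝕋 → ℂ} (hw : Integrable w μ) (φ : C(𝕋, ℂ)) :
    Integrable (fun x => φ x * w x) μ :=
  hw.bdd_mul φ.continuous.aestronglyMeasurable (c := ‖φ‖) (Filter.Eventually.of_forall fun x => φ.norm_coe_le_norm x)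

/-- An integrable function on the circle with vanishing Fourier coefficients is a.e. zero. -/
lemma zz_fourier_uniqueness {w : 𝕋 → ℂ} (hw : Integrable w μ)
    (h : ∀ d : ℤ, fourierCoeff w d = 0) : w =ᵐ[μ] 0 := by
  set Λlin : C(𝕋, ℂ) →ₗ[ℂ] ℂ :=
    { toFun := fun φ => ∫ x, φ x * w x ∂μ
      map_add' := fun φ ψ => by
        simp only [ContinuousMap.add_apply, add_mul]
        exact integral_add (zz_integrable_cmul hw φ) (zz_integrable_cmul hw ψ)
      map_smul' := fun c φ => by
        simp only [ContinuousMap.smul_apply, smul_eq_mul, mul_assoc, RingHom.id_apply]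
        exact integral_const_mul c _ } with hΛlin
  have hbound : ∀ φ : C(𝕋, ℂ), ‖Λlin φ‖ ≤ (∫ x, ‖w x‖ ∂μ) * ‖φ‖ := by
    intro φ
    calc ‖∫ x, φ x * w x ∂μ‖ ≤ ∫ x, ‖φ x * w x‖ ∂μ := norm_integral_le_integral_norm _
      _ ≤ ∫ x, ‖φ‖ * ‖w x‖ ∂μ := by
          refine integral_mono (zz_integrable_cmul hw φ).norm (hw.norm.const_mul _) fun x => ?_
          rw [norm_mul]
          exact mul_le_mul_of_nonneg_right (φ.norm_coe_le_norm x) (norm_nonneg _)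
      _ = (∫ x, ‖w x‖ ∂μ) * ‖φ‖ := by rw [integral_const_mul, mul_comm]
  set Λ : C(𝕋, ℂ) →L[ℂ] ℂ := Λlin.mkContinuous _ hbound with hΛ
  have hker : ∀ φ : C(𝕋, ℂ), Λ φ = 0 := by
    have hsub : (Submodule.span ℂ (Set.range (@fourier (2 * Real.pi)))).topologicalClosure ≤
        Λ.ker := by
      refine Submodule.topologicalClosure_minimal _ ?_ ?_
      · rw [Submodule.span_le]
        rintro _ ⟨d, rfl⟩
        simp only [SetLike.mem_coe, LinearMap.mem_ker]
        have heval : Λ (fourier d) = fourierCoeff w (-d) := by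
          simp only [hΛ, hΛlin, LinearMap.mkContinuous_apply, LinearMap.coe_mk, AddHom.coe_mk]
          rw [fourierCoeff]
          congr 1
          funext x
          rw [neg_neg, smul_eq_mul]
        exact heval.trans (h (-d))
      · exact ContinuousLinearMap.isClosed_ker Λ
    intro φ
    have : φ ∈ (Submodule.span ℂ (Set.range (@fourier (2 * Real.pi)))).topologicalClosure := by
      rw [span_fourier_closure_eq_top]; trivial
    exact hsub this
  have hcont : ∀ φ : C(𝕋, ℂ), ∫ x, φ x * w x ∂μ = 0 := fun φ => hker φ
  have hre : (fun x => (w x).re) =ᵐ[μ] 0 := by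
    refine zz_real_ae_zero hw.re fun φ => ?_
    have h0 := hcont (ContinuousMap.mk (fun x => ((φ x : ℝ) : ℂ))
      (continuous_ofReal.comp φ.continuous))
    have hint := zz_integrable_cmul hw (ContinuousMap.mk (fun x => ((φ x : ℝ) : ℂ))
      (continuous_ofReal.comp φ.continuous))
    have := integral_re hint
    rw [h0] at this
    simp only [ContinuousMap.coe_mk, RCLike.re_to_complex, mul_re, ofReal_re, ofReal_im,
      zero_mul, sub_zero, Complex.zero_re, map_zero] at this
    exact this
  have him : (fun x => (w x).im) =ᵐ[μ] 0 := by
    refine zz_real_ae_zero hw.im fun φ => ?_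
    have h0 := hcont (ContinuousMap.mk (fun x => ((φ x : ℝ) : ℂ))
      (continuous_ofReal.comp φ.continuous))
    have hint := zz_integrable_cmul hw (ContinuousMap.mk (fun x => ((φ x : ℝ) : ℂ))
      (continuous_ofReal.comp φ.continuous))
    have := integral_im hint
    rw [h0] at this
    simp only [ContinuousMap.coe_mk, RCLike.im_to_complex, mul_im, ofReal_re, ofReal_im,
      zero_mul, add_zero, Complex.zero_im, map_zero] at this
    exact this
  filter_upwards [hre, him] with x h1 h2
  simp only [Pi.zero_apply] at h1 h2 ⊢
  exact Complex.ext h1 h2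

/-- Fourier coefficients of an `L²` function as inner products against the exponentials. -/
lemma zz_coeff_eq_inner (w : L2) (k : ℤ) :
    fourierCoeff (w : 𝕋 → ℂ) k = (inner ℂ (e k) w : ℂ) := by
  rw [← fourierBasis_repr, HilbertBasis.repr_apply_apply]
  congr 1
  show (fourierBasis (T := 2 * Real.pi)) k = fourierLp 2 k
  exact congrFun coe_fourierBasis k

/-- Parseval's identity. -/
lemma zz_parseval (u v : L2) : (inner ℂ u v : ℂ)
    = ∑' k : ℤ, conj (fourierCoeff (u : 𝕋 → ℂ) k) * fourierCoeff (v : 𝕋 → ℂ) k := by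
  have hb : ∀ (w : L2) (k : ℤ),
      (inner ℂ ((fourierBasis (T := 2 * Real.pi)) k) w : ℂ) = fourierCoeff (w : 𝕋 → ℂ) k :=
    fun w k => by rw [← HilbertBasis.repr_apply_apply, fourierBasis_repr]
  have := HilbertBasis.tsum_inner_mul_inner (fourierBasis (T := 2 * Real.pi)) u v
  rw [← this]
  refine tsum_congr fun k => ?_
  rw [← inner_conj_symm u, hb, hb]

/-- Negative Fourier coefficients of elements of the Hardy space vanish. -/
lemma zz_coeff_H2 {u : L2} (hu : u ∈ H2) {k : ℤ} (hk : k < 0) :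
    fourierCoeff (u : 𝕋 → ℂ) k = 0 := by
  rw [zz_coeff_eq_inner]
  have hsub : H2 ≤ (innerSL ℂ (e k)).ker := by
    refine Submodule.topologicalClosure_minimal _ ?_ ?_
    · rw [Submodule.span_le]
      rintro _ ⟨n, rfl⟩
      simp only [SetLike.mem_coe, LinearMap.mem_ker, innerSL_apply_apply]
      exact orthonormal_fourier.2 (show k ≠ (n : ℤ) by omega)
    · exact ContinuousLinearMap.isClosed_ker (innerSL ℂ (e k))
  exact hsub hu

lemma zz_coeFn_mulFourier (n : ℤ) (u : L2) :
    (mulFourier n u : 𝕋 → ℂ) =ᵐ[μ] fun x => fourier n x * u x :=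
  MemLp.coeFn_toLp _

/-- Fourier coefficients shift under multiplication by `e_n`. -/
lemma zz_coeff_mulFourier (n : ℤ) (u : L2) (k : ℤ) :
    fourierCoeff ((mulFourier n u : L2) : 𝕋 → ℂ) k = fourierCoeff (u : 𝕋 → ℂ) (k - n) := by
  rw [fourierCoeff, fourierCoeff]
  refine integral_congr_ae ?_
  filter_upwards [zz_coeFn_mulFourier n u] with x hx
  rw [hx, smul_eq_mul, smul_eq_mul, ← mul_assoc, ← fourier_add]
  congr 2
  ring

/-- The key identity: inner products of shifted functions are Fourier coefficients of
`conj f * g`. -/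
lemma zz_inner_mulFourier (f g : L2) (n m : ℤ) :
    (inner ℂ (mulFourier n f) (mulFourier m g) : ℂ)
      = fourierCoeff (fun x => conj ((f : 𝕋 → ℂ) x) * (g : 𝕋 → ℂ) x) (n - m) := by
  rw [MeasureTheory.L2.inner_def, fourierCoeff]
  refine integral_congr_ae ?_
  filter_upwards [zz_coeFn_mulFourier n f, zz_coeFn_mulFourier m g] with x hf hg
  rw [hf, hg, RCLike.inner_apply, smul_eq_mul]
  rw [map_mul, ← fourier_neg]
  have : -(n - m) = -n + m := by ring
  rw [this, fourier_add]
  ring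

end NeilToeplitz

namespace NeilToeplitz

/-- the representation of the Neil algebra on `H²_V` (for `V ⊆ span{e₀,e₁}`) has
rank one: two nonzero closed subspaces of `H²_V`, each invariant under multiplication by every
analytic polynomial with vanishing `e₁`-coefficient, cannot be orthogonal. -/
theorem neil_representation_rank_one (V : Submodule ℂ L2)
    (hV : V ≤ Submodule.span ℂ {e 0, e 1})
    (M N : Submodule ℂ L2) (hMV : M ≤ H2V V) (hNV : N ≤ H2V V)
    (hMc : IsClosed (M : Set L2)) (hNc : IsClosed (N : Set L2))
    (hM0 : M ≠ ⊥) (hN0 : N ≠ ⊥)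
    (hMinv : ∀ n : ℕ, n ≠ 1 → ∀ f ∈ M, mulFourier (n : ℤ) f ∈ M)
    (hNinv : ∀ n : ℕ, n ≠ 1 → ∀ f ∈ N, mulFourier (n : ℤ) f ∈ N) :
    ∃ f ∈ M, ∃ g ∈ N, (inner ℂ f g : ℂ) ≠ 0 := by
  by_contra hcon
  push_neg at hcon
  obtain ⟨f, hfM, hf0⟩ := Submodule.exists_mem_ne_zero_of_ne_bot hM0
  obtain ⟨g, hgN, hg0⟩ := Submodule.exists_mem_ne_zero_of_ne_bot hN0
  have hfH2 : f ∈ H2 := (hMV hfM).1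
  have hgH2 : g ∈ H2 := (hNV hgN).1
  set A : ℤ → ℂ := fun k => fourierCoeff ((f : 𝕋 → ℂ)) k with hA
  set B : ℤ → ℂ := fun k => fourierCoeff ((g : 𝕋 → ℂ)) k with hB
  have hAk : ∀ k : ℤ, A k = fourierCoeff ((f : 𝕋 → ℂ)) k := fun _ => rfl
  have hBk : ∀ k : ℤ, B k = fourierCoeff ((g : 𝕋 → ℂ)) k := fun _ => rfl
  -- leading nonzero coefficients
  have hnonzero : ∀ (u : L2), u ≠ 0 → ∃ k : ℤ, fourierCoeff ((u : 𝕋 → ℂ)) k ≠ 0 := by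
    intro u hu
    by_contra hall
    push_neg at hall
    have : fourierBasis.repr u = 0 := by
      ext k
      simp only [lp.coeFn_zero, Pi.zero_apply, fourierBasis_repr]
      exact hall k
    exact hu (by simpa using (fourierBasis (T := 2 * Real.pi)).repr.map_eq_zero_iff.mp this)
  have hminimal : ∀ (u : L2), u ∈ H2 → u ≠ 0 → ∃ p : ℕ,
      fourierCoeff ((u : 𝕋 → ℂ)) (p : ℤ) ≠ 0 ∧
      ∀ j : ℤ, j < (p : ℤ) → fourierCoeff ((u : 𝕋 → ℂ)) j = 0 := by
    intro u huH2 hu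
    obtain ⟨k, hk⟩ := hnonzero u hu
    have hk0 : 0 ≤ k := by
      by_contra hneg
      exact hk (zz_coeff_H2 huH2 (by omega))
    have hex : ∃ n : ℕ, fourierCoeff ((u : 𝕋 → ℂ)) (n : ℤ) ≠ 0 :=
      ⟨k.toNat, by rwa [Int.toNat_of_nonneg hk0]⟩
    classical
    refine ⟨Nat.find hex, Nat.find_spec hex, fun j hj => ?_⟩
    rcases lt_or_ge j 0 with hj0 | hj0
    · exact zz_coeff_H2 huH2 hj0
    · have : j = ((j.toNat : ℕ) : ℤ) := (Int.toNat_of_nonneg hj0).symm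
      rw [this]
      have hlt : j.toNat < Nat.find hex := by omega
      by_contra hne
      exact Nat.find_min hex hlt hne
  obtain ⟨p, hp, hpmin⟩ := hminimal f hfH2 hf0
  obtain ⟨q, hq, hqmin⟩ := hminimal g hgH2 hg0
  -- all Fourier coefficients of conj f * g vanish
  set w : 𝕋 → ℂ := fun x => conj ((f : 𝕋 → ℂ) x) * (g : 𝕋 → ℂ) x with hw
  have hwint : Integrable w μ := by
    have := MeasureTheory.L2.integrable_inner (𝕜 := ℂ) f g
    simpa [hw, RCLike.inner_apply, mul_comm] using this
  have hwcoeff : ∀ d : ℤ, fourierCoeff w d = 0 := by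
    intro d
    obtain ⟨n, m, hn, hm, hnm⟩ : ∃ n m : ℕ, n ≠ 1 ∧ m ≠ 1 ∧ (n : ℤ) - (m : ℤ) = d := by
      rcases le_or_gt 0 d with hd | hd
      · exact ⟨d.toNat + 2, 2, by omega, by omega, by omega⟩
      · exact ⟨2, (2 - d).toNat, by omega, by omega, by omega⟩
    have h1 := zz_inner_mulFourier f g (n : ℤ) (m : ℤ)
    rw [hnm] at h1
    rw [← hw] at h1
    rw [← h1]
    exact hcon _ (hMinv n hn f hfM) _ (hNinv m hm g hgN)
  have hwz : w =ᵐ[μ] 0 := zz_fourier_uniqueness hwint hwcoeff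
  -- hence f * g = 0 a.e.
  have hfg : (fun x => (f : 𝕋 → ℂ) x * (g : 𝕋 → ℂ) x) =ᵐ[μ] 0 := by
    filter_upwards [hwz] with x hx
    simp only [hw, Pi.zero_apply] at hx ⊢
    rcases mul_eq_zero.mp hx with h1 | h1
    · rw [show (f : 𝕋 → ℂ) x = 0 from star_eq_zero.mp h1, zero_mul]
    · rw [h1, mul_zero]
  have hprodcoeff : ∀ nn : ℤ, fourierCoeff (fun x => (f : 𝕋 → ℂ) x * (g : 𝕋 → ℂ) x) nn = 0 := by
    intro nn
    rw [fourierCoeff]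
    rw [integral_congr_ae (by filter_upwards [hfg] with x hx; rw [hx]; simp : ∀ᵐ x ∂μ,
      fourier (-nn) x • ((f : 𝕋 → ℂ) x * (g : 𝕋 → ℂ) x) = 0)]
    simp
  -- the conjugate of f as an element of L²
  have hsmem : MemLp (fun x => conj ((f : 𝕋 → ℂ) x)) 2 μ := by
    constructor
    · exact RCLike.continuous_conj.comp_aestronglyMeasurable (Lp.aestronglyMeasurable f)
    · rw [eLpNorm_congr_norm_ae (Filter.Eventually.of_forall fun x => by
        simp : ∀ᵐ x ∂μ, ‖conj ((f : 𝕋 → ℂ) x)‖ = ‖(f : 𝕋 → ℂ) x‖)]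
      exact (Lp.memLp f).2
  set sf : L2 := hsmem.toLp _ with hsf
  have hsf_coe : (sf : 𝕋 → ℂ) =ᵐ[μ] fun x => conj ((f : 𝕋 → ℂ) x) := MemLp.coeFn_toLp _
  have hsf_coeff : ∀ j : ℤ, fourierCoeff ((sf : L2) : 𝕋 → ℂ) j = conj (A (-j)) := by
    intro j
    have hae : ∀ᵐ x ∂μ, fourier (-j) x • ((sf : L2) : 𝕋 → ℂ) x
        = conj (fourier j x * (f : 𝕋 → ℂ) x) := by
      filter_upwards [hsf_coe] with x hx
      rw [hx, smul_eq_mul, map_mul, ← fourier_neg]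
    rw [fourierCoeff, integral_congr_ae hae, integral_conj, hAk]
    congr 1
    rw [fourierCoeff]
    refine integral_congr_ae (Filter.Eventually.of_forall fun x => ?_)
    simp only [smul_eq_mul, neg_neg]
  -- convolution identity
  have hconv : ∀ nn : ℤ, fourierCoeff (fun x => (f : 𝕋 → ℂ) x * (g : 𝕋 → ℂ) x) nn
      = ∑' j : ℤ, A j * B (nn - j) := by
    intro nn
    have h1 : fourierCoeff (fun x => (f : 𝕋 → ℂ) x * (g : 𝕋 → ℂ) x) nn
        = (inner ℂ (mulFourier nn sf) g : ℂ) := by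
      rw [MeasureTheory.L2.inner_def, fourierCoeff]
      refine integral_congr_ae ?_
      filter_upwards [zz_coeFn_mulFourier nn sf, hsf_coe] with x h2 h3
      rw [RCLike.inner_apply, h2, map_mul, h3, ← fourier_neg, smul_eq_mul,
        starRingEnd_self_apply]
      ring
    rw [h1, zz_parseval]
    have h2 : ∀ k : ℤ, conj (fourierCoeff ((mulFourier nn sf : L2) : 𝕋 → ℂ) k)
        * fourierCoeff ((g : L2) : 𝕋 → ℂ) k = A (nn - k) * B k := by
      intro k
      rw [zz_coeff_mulFourier, hsf_coeff, starRingEnd_self_apply,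
        show -(k - nn) = nn - k by ring, ← hBk k]
    rw [tsum_congr h2]
    rw [← (Equiv.subLeft nn).tsum_eq (fun j => A j * B (nn - j))]
    refine tsum_congr fun k => ?_
    simp only [Equiv.subLeft_apply]
    congr 1
    ring_nf
  -- contradiction via leading coefficients
  have hzero : (0 : ℂ) = A (p : ℤ) * B (q : ℤ) := by
    have h1 := hconv ((p : ℤ) + (q : ℤ))
    rw [hprodcoeff] at h1
    rw [h1]
    rw [tsum_eq_single (p : ℤ) ?_]
    · rw [hAk, hBk, show (p : ℤ) + (q : ℤ) - (p : ℤ) = (q : ℤ) by ring]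
    · intro j hj
      rcases lt_or_ge j (p : ℤ) with hlt | hle
      · rw [hAk, hpmin j hlt, zero_mul]
      · have hlt2 : (p : ℤ) + (q : ℤ) - j < (q : ℤ) := by omega
        rw [hBk, hqmin _ hlt2, mul_zero]
  exact (mul_ne_zero hp hq) hzero.symm


end NeilToeplitz
end
end

section
/- Let A be a unital complex algebra, H and K complex Hilbert spaces, ν : A → B(H) and ρ : A → B(K) unital algebra homomorphisms into the bounded operators, and V : H → K a linear isometry such that ν(a) = V* ρ(a) V for all a ∈ A. Then V(H) is semi-invariant for ρ: there exist closed subspaces M ⊆ N of K, each invariant under ρ(a) for every a ∈ A, such that V(H) = N ∩ M^⊥. -/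
open ContinuousLinearMap in
/-- Sarason's Lemma: if `ν(a) = V* ρ(a) V` for all `a`, with `V` an isometry,
then `V(H)` is a semi-invariant subspace for `ρ`. -/
theorem range_semiInvariant_of_dilation
    {A : Type*} [Ring A] [Algebra ℂ A]
    {H K : Type*} [NormedAddCommGroup H] [InnerProductSpace ℂ H] [CompleteSpace H]
    [NormedAddCommGroup K] [InnerProductSpace ℂ K] [CompleteSpace K]
    (ν : A →ₐ[ℂ] (H →L[ℂ] H)) (ρ : A →ₐ[ℂ] (K →L[ℂ] K))
    (V : H →ₗᵢ[ℂ] K)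
    (hdil : ∀ a : A, ν a = (ContinuousLinearMap.adjoint V.toContinuousLinearMap).comp
        ((ρ a).comp V.toContinuousLinearMap)) :
    ∃ M N : Submodule ℂ K, IsClosed (M : Set K) ∧ IsClosed (N : Set K) ∧ M ≤ N ∧
      (∀ a : A, ∀ x ∈ M, ρ a x ∈ M) ∧ (∀ a : A, ∀ x ∈ N, ρ a x ∈ N) ∧
      LinearMap.range V.toLinearMap = N ⊓ Mᗮ := by
  classical
  set Vc : H →L[ℂ] K := V.toContinuousLinearMap with hVc
  set Vs : K →L[ℂ] H := ContinuousLinearMap.adjoint Vc with hVs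
  set L : Submodule ℂ K := LinearMap.range V.toLinearMap with hL
  -- basic facts
  have hVcV : ∀ h : H, Vc h = V h := fun h => rfl
  have hLclosed : IsClosed (L : Set K) := by
    have := V.isometry.isClosedEmbedding.isClosed_range
    rw [hL, LinearMap.coe_range]
    exact this
  have hVsV : ∀ h : H, Vs (V h) = h := by
    intro h
    apply ext_inner_right ℂ
    intro u
    rw [hVs, ContinuousLinearMap.adjoint_inner_left]
    simpa [hVcV] using (V.inner_map_map h u)
  have hVsadj : ∀ (h : H) (y : K), (inner ℂ h (Vs y) : ℂ) = inner ℂ (V h) y := by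
    intro h y
    rw [hVs, ContinuousLinearMap.adjoint_inner_right]
    rfl
  -- the dilation identity pointwise
  have hdil' : ∀ (a : A) (h : H), ν a h = Vs (ρ a (V h)) := by
    intro a h
    rw [hdil a]
    rfl
  -- N0 : algebraic invariant subspace generated by L
  set N0 : Submodule ℂ K := ⨆ a : A, Submodule.map ((ρ a) : K →ₗ[ℂ] K) L with hN0
  have hLN0 : L ≤ N0 := by
    have h1 : Submodule.map ((ρ (1 : A)) : K →ₗ[ℂ] K) L ≤ N0 :=
      le_iSup (fun a : A => Submodule.map ((ρ a) : K →ₗ[ℂ] K) L) (1 : A)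
    have h2 : Submodule.map ((1 : K →L[ℂ] K) : K →ₗ[ℂ] K) L = L := by
      ext x; simp
    rw [map_one, h2] at h1
    exact h1
  have hN0inv : ∀ b : A, ∀ x ∈ N0, ρ b x ∈ N0 := by
    intro b
    have hcm : N0 ≤ Submodule.comap ((ρ b) : K →ₗ[ℂ] K) N0 := by
      refine iSup_le fun a => ?_
      rw [← Submodule.map_le_iff_le_comap, ← Submodule.map_comp]
      have hco : ((ρ b) : K →ₗ[ℂ] K) ∘ₗ ((ρ a) : K →ₗ[ℂ] K) = ((ρ (b * a)) : K →ₗ[ℂ] K) := by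
        ext x; simp [map_mul]
      rw [hco]
      exact le_iSup (fun a : A => Submodule.map ((ρ a) : K →ₗ[ℂ] K) L) (b * a)
    exact fun x hx => hcm hx
  set N : Submodule ℂ K := N0.topologicalClosure with hN
  have hNclosed : IsClosed (N : Set K) := N0.isClosed_topologicalClosure
  have hNinv : ∀ b : A, ∀ x ∈ N, ρ b x ∈ N := by
    intro b x hx
    have hmaps : Set.MapsTo (ρ b) (N0 : Set K) (N0 : Set K) := fun y hy => hN0inv b y hy
    exact hmaps.closure (ρ b).continuous hx
  have hLN : L ≤ N := hLN0.trans N0.le_topologicalClosure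
  -- key identity: on N, V V* ρ(b) y = V ν(b) V* y
  have hkey : ∀ (b : A), ∀ y ∈ N, Vc (Vs (ρ b y)) = Vc (ν b (Vs y)) := by
    intro b
    set T : K →L[ℂ] K :=
      (Vc.comp Vs).comp (ρ b) - (Vc.comp ((ν b).comp Vs)) with hT
    have hker : N ≤ LinearMap.ker (T : K →ₗ[ℂ] K) := by
      have hclosed : IsClosed ((LinearMap.ker (T : K →ₗ[ℂ] K) : Submodule ℂ K) : Set K) := by
        have hset : ((LinearMap.ker (T : K →ₗ[ℂ] K) : Submodule ℂ K) : Set K) = T ⁻¹' {0} := by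
          ext z; simp [LinearMap.mem_ker]
        rw [hset]
        exact isClosed_singleton.preimage T.continuous
      refine Submodule.topologicalClosure_minimal _ ?_ hclosed
      refine iSup_le fun a => ?_
      rintro y ⟨u, ⟨h, rfl⟩, rfl⟩
      simp only [SetLike.mem_coe, LinearMap.mem_ker]
      have h1 : ρ b (ρ a (V.toLinearMap h)) = ρ (b * a) (V h) := by
        simp [map_mul]
      have h2 : Vs (ρ (b * a) (V h)) = ν (b * a) h := (hdil' (b * a) h).symm
      have h3 : Vs (ρ a (V h)) = ν a h := (hdil' a h).symm
      show Vc (Vs (ρ b (ρ a (V.toLinearMap h)))) - Vc (ν b (Vs (ρ a (V.toLinearMap h)))) = 0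
      have h4 : (ρ a) (V.toLinearMap h) = ρ a (V h) := rfl
      rw [h1, h2, h4, h3, map_mul]
      simp [ContinuousLinearMap.mul_apply]
    intro y hy
    have hy' := hker hy
    rw [LinearMap.mem_ker] at hy'
    have hy2 : Vc (Vs (ρ b y)) - Vc (ν b (Vs y)) = 0 := hy'
    exact sub_eq_zero.mp hy2
  -- V* vanishes on L^⊥
  have hVsbot : ∀ y ∈ Lᗮ, Vs y = 0 := by
    intro y hy
    apply ext_inner_right ℂ
    intro h
    rw [hVs, ContinuousLinearMap.adjoint_inner_left]
    have h0 := (Submodule.mem_orthogonal L y).mp hy (V h) ⟨h, rfl⟩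
    have h1 : (inner ℂ y (V h) : ℂ) = 0 := inner_eq_zero_symm.mp h0
    simpa [hVcV] using h1
  -- define M
  set M : Submodule ℂ K := N ⊓ Lᗮ with hM
  have hMclosed : IsClosed (M : Set K) := by
    have : (M : Set K) = (N : Set K) ∩ (Lᗮ : Set K) := rfl
    rw [this]
    exact hNclosed.inter (Submodule.isClosed_orthogonal L)
  have hMN : M ≤ N := inf_le_left
  have hMinv : ∀ b : A, ∀ x ∈ M, ρ b x ∈ M := by
    intro b x hx
    obtain ⟨hxN, hxL⟩ := hx
    refine ⟨hNinv b x hxN, ?_⟩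
    -- need ρ b x ⊥ L
    refine (Submodule.mem_orthogonal _ _).mpr ?_
    rintro u ⟨h, rfl⟩
    have h0 : Vc (Vs (ρ b x)) = 0 := by
      rw [hkey b x hxN, hVsbot x hxL]
      simp
    have h1 : Vs (ρ b x) = 0 := by
      have h5 := congrArg Vs h0
      rw [map_zero] at h5
      have h6 : Vs (Vc (Vs (ρ b x))) = Vs (ρ b x) := hVsV (Vs (ρ b x))
      rw [← h6, h5]
    have : (inner ℂ (V h) (ρ b x) : ℂ) = 0 := by
      rw [← hVsadj h (ρ b x), h1, inner_zero_right]
    simpa using this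
  refine ⟨M, N, hMclosed, hNclosed, hMN, hMinv, hNinv, ?_⟩
  -- L = N ⊓ Mᗮ
  apply le_antisymm
  · refine le_inf hLN ?_
    have hMLbot : M ≤ Lᗮ := inf_le_right
    calc L ≤ Lᗮᗮ := Submodule.le_orthogonal_orthogonal L
    _ ≤ Mᗮ := Submodule.orthogonal_le hMLbot
  · rintro y ⟨hyN, hyM⟩
    set p : K := V (Vs y) with hp
    have hpL : p ∈ L := ⟨Vs y, rfl⟩
    have hdiff : y - p ∈ Lᗮ := by
      rw [Submodule.mem_orthogonal]
      rintro u ⟨h, rfl⟩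
      have : (inner ℂ (V h) (y - p) : ℂ) = inner ℂ (V h) y - inner ℂ (V h) p := inner_sub_right _ _ _
      have hip : (inner ℂ (V h) p : ℂ) = inner ℂ (V h) y := by
        rw [hp]
        have := V.inner_map_map h (Vs y)
        rw [this, hVsadj h y]
      show (inner ℂ (V.toLinearMap h) (y - p) : ℂ) = 0
      have huv : (inner ℂ (V h) (y - p) : ℂ) = 0 := by
        rw [inner_sub_right, hip, sub_self]
      exact huv
    have hdiffM : y - p ∈ M := ⟨N.sub_mem hyN (hLN hpL), hdiff⟩
    have h1 : (inner ℂ (y - p) y : ℂ) = 0 :=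
      (Submodule.mem_orthogonal M y).mp hyM (y - p) hdiffM
    have h2 : (inner ℂ (y - p) p : ℂ) = 0 := by
      have := (Submodule.mem_orthogonal L (y - p)).mp hdiff p hpL
      exact inner_eq_zero_symm.mp this
    have h3 : (inner ℂ (y - p) (y - p) : ℂ) = 0 := by
      rw [inner_sub_right, h1, h2, sub_self]
    have h4 : y - p = 0 := by
      exact inner_self_eq_zero.mp h3
    have : y = p := by rwa [sub_eq_zero] at h4
    exact this ▸ hpL
end

section
/- Let K be a complex Hilbert space, T : K → K a contraction (‖T‖ ≤ 1), and H a closed subspace of K that is semi-invariant for T, i.e. there exist closed T-invariant subspaces M ⊆ N of K with H = N ∩ M^⊥. If the compression S := P_H T|_H is an isometry on H (‖P_H(T h)‖ = ‖h‖ for all h ∈ H, where P_H is the orthogonal projection of K onto H), then H is invariant for T: T(H) ⊆ H. -/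
/-- if `H` is a semi-invariant subspace for a contraction `T` and the compression
`S = P_H T|_H` is an isometry, then `H` is invariant for `T`. -/
theorem invariant_of_isometric_compression
    {K : Type*} [NormedAddCommGroup K] [InnerProductSpace ℂ K] [CompleteSpace K]
    (T : K →L[ℂ] K) (hT : ‖T‖ ≤ 1)
    (M N : Submodule ℂ K) (hMc : IsClosed (M : Set K)) (hNc : IsClosed (N : Set K))
    (hMN : M ≤ N) (hMinv : ∀ x ∈ M, T x ∈ M) (hNinv : ∀ x ∈ N, T x ∈ N)
    (H : Submodule ℂ K) [CompleteSpace H] (hH : H = N ⊓ Mᗮ)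
    (hiso : ∀ h ∈ H, ‖(H.orthogonalProjectionOnto (T h) : K)‖ = ‖h‖) :
    ∀ h ∈ H, T h ∈ H := by
  intro h hh
  have hle : ‖T h‖ ≤ ‖h‖ := by
    calc ‖T h‖ ≤ ‖T‖ * ‖h‖ := T.le_opNorm h
    _ ≤ 1 * ‖h‖ := by gcongr
    _ = ‖h‖ := one_mul _
  have hpyth : ‖T h‖ ^ 2 = ‖(H.orthogonalProjectionOnto (T h) : K)‖ ^ 2 +
      ‖(Hᗮ.orthogonalProjectionOnto (T h) : K)‖ ^ 2 :=
    Submodule.norm_sq_eq_add_norm_sq_projection (T h) H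
  have hproj := hiso h hh
  have hzero : ‖(Hᗮ.orthogonalProjectionOnto (T h) : K)‖ ^ 2 = 0 := by
    nlinarith [norm_nonneg (T h), norm_nonneg h, sq_nonneg ‖(Hᗮ.orthogonalProjectionOnto (T h) : K)‖]
  have hz : (Hᗮ.orthogonalProjectionOnto (T h) : K) = 0 := by
    have := pow_eq_zero_iff (n := 2) (by norm_num) |>.mp hzero
    simpa using norm_eq_zero.mp this
  have hdecomp := Submodule.starProjection_add_starProjection_orthogonal (K := H) (T h)
  rw [Submodule.starProjection_apply, Submodule.starProjection_apply, hz, add_zero] at hdecomp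
  rw [← hdecomp]
  exact (H.orthogonalProjectionOnto (T h)).2
end

section
/- Let A be a unital complex normed algebra, H a complex Hilbert space, and ν : A → B(H) a unital contractive algebra homomorphism (‖ν(a)‖ ≤ ‖a‖ for all a ∈ A). Suppose {a_i}_{i∈J} ⊆ A is a set of elements with ‖a_i‖ = 1 for all i that generates a dense subalgebra of A, and suppose ν(a_i) is an isometry for every i ∈ J. Then ν is extremal: for every complex Hilbert space K, every unital contractive algebra homomorphism ρ : A → B(K), and every linear isometry V : H → K satisfying ν(a) = V* ρ(a) V for all a ∈ A, one has V ν(a) = ρ(a) V for all a ∈ A. -/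
set_option maxHeartbeats 1600000


/-- a unital contractive representation of a unital complex normed algebra that
sends a norm-one generating set (generating a dense subalgebra) to isometries is extremal. -/
theorem extremal_of_isometric_generators
    {A : Type*} [NormedRing A] [NormedAlgebra ℂ A]
    {H : Type*} [NormedAddCommGroup H] [InnerProductSpace ℂ H] [CompleteSpace H]
    (ν : A →ₐ[ℂ] (H →L[ℂ] H)) (hν : ∀ a : A, ‖ν a‖ ≤ ‖a‖)
    {J : Type*} (gen : J → A) (hnorm : ∀ i, ‖gen i‖ = 1)
    (hdense : Dense ((Algebra.adjoin ℂ (Set.range gen) : Subalgebra ℂ A) : Set A))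
    (hisom : ∀ (i : J) (x : H), ‖ν (gen i) x‖ = ‖x‖) :
    ∀ (K : Type*) [NormedAddCommGroup K] [InnerProductSpace ℂ K] [CompleteSpace K]
      (ρ : A →ₐ[ℂ] (K →L[ℂ] K)), (∀ a : A, ‖ρ a‖ ≤ ‖a‖) →
      ∀ V : H →ₗᵢ[ℂ] K,
        (∀ a : A, ν a = (ContinuousLinearMap.adjoint V.toContinuousLinearMap).comp
          ((ρ a).comp V.toContinuousLinearMap)) →
        ∀ (a : A) (x : H), V (ν a x) = ρ a (V x) := by
  intro K _ _ _ ρ hρ V hcomp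
  set Vc := V.toContinuousLinearMap with hVcdef
  set Vs := ContinuousLinearMap.adjoint Vc with hVsdef
  have hVcx : ∀ x : H, Vc x = V x := fun x => rfl
  have hVnorm : ∀ x : H, ‖Vc x‖ = ‖x‖ := fun x => V.norm_map x
  -- the identity holds on generators
  have hgen : ∀ (i : J) (x : H), V (ν (gen i) x) = ρ (gen i) (V x) := by
    intro i x
    set y := ρ (gen i) (V x) with hy
    have hVsy : Vs y = ν (gen i) x := by
      have h := congrArg (fun T => T x) (hcomp (gen i))
      simp only [ContinuousLinearMap.comp_apply] at h
      rw [h]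
      rfl
    have h1 : ‖Vs y‖ = ‖x‖ := by rw [hVsy, hisom]
    have h2 : ‖y‖ ≤ ‖x‖ := by
      calc ‖y‖ ≤ ‖ρ (gen i)‖ * ‖V x‖ := (ρ (gen i)).le_opNorm _
        _ ≤ ‖gen i‖ * ‖V x‖ := by
            have := hρ (gen i)
            exact mul_le_mul_of_nonneg_right this (norm_nonneg _)
        _ = ‖x‖ := by rw [hnorm, V.norm_map, one_mul]
    have hinner : (inner ℂ y (Vc (Vs y)) : ℂ) = inner ℂ (Vs y) (Vs y) := by
      rw [hVsdef, ContinuousLinearMap.adjoint_inner_left]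
    have pyth : ‖y - Vc (Vs y)‖ ^ 2 = ‖y‖ ^ 2 - ‖Vs y‖ ^ 2 := by
      have hns := @norm_sub_sq ℂ _ _ _ _ y (Vc (Vs y))
      have hre : RCLike.re (inner ℂ y (Vc (Vs y)) : ℂ) = ‖Vs y‖ ^ 2 := by
        rw [hinner]
        exact_mod_cast inner_self_eq_norm_sq (𝕜 := ℂ) (Vs y)
      rw [hns, hre, hVnorm]
      ring
    have hzero : ‖y - Vc (Vs y)‖ = 0 := by
      have hle : ‖y - Vc (Vs y)‖ ^ 2 ≤ 0 := by
        rw [pyth, h1]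
        nlinarith [norm_nonneg y]
      nlinarith [norm_nonneg (y - Vc (Vs y))]
    have hyy : y = Vc (Vs y) := by
      have := norm_eq_zero.mp hzero
      have := sub_eq_zero.mp this
      exact this
    calc V (ν (gen i) x) = Vc (Vs y) := by rw [hVsy]; rfl
      _ = y := hyy.symm
  -- the identity holds on the generated subalgebra, by induction
  have hS : ∀ a ∈ Algebra.adjoin ℂ (Set.range gen), ∀ x : H, V (ν a x) = ρ a (V x) := by
    intro a ha
    induction ha using Algebra.adjoin_induction with
    | mem b hb =>
        obtain ⟨i, rfl⟩ := hb
        exact hgen i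
    | algebraMap c =>
        intro x
        rw [AlgHom.commutes, AlgHom.commutes]
        simp only [Algebra.algebraMap_eq_smul_one, ContinuousLinearMap.smul_apply,
          ContinuousLinearMap.one_apply, map_smul]
    | add b c _ _ hb hc =>
        intro x
        simp only [map_add, ContinuousLinearMap.add_apply]
        rw [hb, hc]
    | mul b c _ _ hb hc =>
        intro x
        simp only [map_mul, ContinuousLinearMap.mul_apply]
        rw [hb, hc]
  intro a x
  -- continuity of both sides in a
  have lip1 : LipschitzWith ‖x‖₊ (fun a : A => ν a x) := by
    refine LipschitzWith.of_dist_le_mul (fun a b => ?_)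
    rw [dist_eq_norm, dist_eq_norm]
    calc ‖ν a x - ν b x‖ = ‖(ν a - ν b) x‖ := by
          simp only [ContinuousLinearMap.sub_apply]
      _ ≤ ‖ν a - ν b‖ * ‖x‖ := (ν a - ν b).le_opNorm x
      _ = ‖ν (a - b)‖ * ‖x‖ := by rw [map_sub]
      _ ≤ ‖a - b‖ * ‖x‖ := mul_le_mul_of_nonneg_right (hν _) (norm_nonneg x)
      _ = ‖x‖₊ * ‖a - b‖ := by rw [mul_comm]; rfl
  have lip2 : LipschitzWith ‖x‖₊ (fun a : A => ρ a (V x)) := by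
    refine LipschitzWith.of_dist_le_mul (fun a b => ?_)
    rw [dist_eq_norm, dist_eq_norm]
    calc ‖ρ a (V x) - ρ b (V x)‖ = ‖(ρ a - ρ b) (V x)‖ := by
          simp only [ContinuousLinearMap.sub_apply]
      _ ≤ ‖ρ a - ρ b‖ * ‖V x‖ := (ρ a - ρ b).le_opNorm _
      _ = ‖ρ (a - b)‖ * ‖x‖ := by rw [map_sub, V.norm_map]
      _ ≤ ‖a - b‖ * ‖x‖ := mul_le_mul_of_nonneg_right (hρ _) (norm_nonneg x)
      _ = ‖x‖₊ * ‖a - b‖ := by rw [mul_comm]; rfl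
  have cont1 : Continuous (fun a : A => V (ν a x)) :=
    V.continuous.comp lip1.continuous
  have cont2 : Continuous (fun a : A => ρ a (V x)) := lip2.continuous
  have heq := Continuous.ext_on hdense cont1 cont2 (fun a ha => hS a ha x)
  exact congrFun heq a
end
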